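/- Let M ⊆ S_k^n be a simple (⊓,⊔)-closed set and let x be a join-irreducible element of M. Then there exists a unique y ∈ M that is a lower cover of x, i.e., y ≺ x and there is no z ∈ M with y ≺ z ≺ x. -/

import Mathlib

/-- The partial order on `S_k = {0,1,…,k}`: `a ⪯ b` iff `a = 0` or `a = b`. -/
def pre {k : ℕ} (a b : Fin (k + 1)) : Prop := a = 0 ∨ a = b

instance {k : ℕ} (a b : Fin (k + 1)) : Decidable (pre a b) :=
  decidable_of_iff (a = 0 ∨ a = b) Iff.rfl

/-- The componentwise order `⪯` on `S_k^n`. -/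
def preV {k n : ℕ} (x y : Fin n → Fin (k + 1)) : Prop := ∀ i, pre (x i) (y i)

/-- The operation `⊓` on `S_k^n`. -/
def sqcap {k n : ℕ} (x y : Fin n → Fin (k + 1)) : Fin n → Fin (k + 1) :=
  fun i => if pre (x i) (y i) ∨ pre (y i) (x i) then min (x i) (y i) else 0

/-- The operation `⊔` on `S_k^n`. -/
def sqcup {k n : ℕ} (x y : Fin n → Fin (k + 1)) : Fin n → Fin (k + 1) :=
  fun i => if pre (x i) (y i) ∨ pre (y i) (x i) then max (x i) (y i) else 0

/-- A `(⊓,⊔)`-closed subset of `S_k^n`. -/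
def closedSet {k n : ℕ} (M : Set (Fin n → Fin (k + 1))) : Prop :=
  M.Nonempty ∧ ∀ x ∈ M, ∀ y ∈ M, sqcap x y ∈ M ∧ sqcup x y ∈ M

/-- Strict version of `⪯`. -/
def strictPreV {k n : ℕ} (x y : Fin n → Fin (k + 1)) : Prop := preV x y ∧ x ≠ y

/-- `m` is the minimum element of `M` with respect to `⪯`. -/
def isMinOf {k n : ℕ} (M : Set (Fin n → Fin (k + 1))) (m : Fin n → Fin (k + 1)) : Prop :=
  m ∈ M ∧ ∀ x ∈ M, preV m x

/-- `u` is the least upper bound of `S` inside `(M, ⪯)`. -/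
def isLUBof {k n : ℕ} (M S : Set (Fin n → Fin (k + 1))) (u : Fin n → Fin (k + 1)) : Prop :=
  u ∈ M ∧ (∀ s ∈ S, preV s u) ∧ ∀ w ∈ M, (∀ s ∈ S, preV s w) → preV u w

/-- `x` is a join-irreducible element of `M`. -/
def joinIrr {k n : ℕ} (M : Set (Fin n → Fin (k + 1))) (x : Fin n → Fin (k + 1)) : Prop :=
  x ∈ M ∧ ¬ isMinOf M x ∧ ¬ isLUBof M {y | y ∈ M ∧ strictPreV y x} x

/-- A `(⊓,⊔)`-closed set is simple if its minimum element is the all-zero vector. -/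
def simpleSet {k n : ℕ} (M : Set (Fin n → Fin (k + 1))) : Prop :=
  isMinOf M (fun _ => 0)

/-- `y` is a lower cover of `x` in `M`. -/
def lowerCover {k n : ℕ} (M : Set (Fin n → Fin (k + 1)))
    (y x : Fin n → Fin (k + 1)) : Prop :=
  y ∈ M ∧ strictPreV y x ∧ ¬ ∃ z ∈ M, strictPreV y z ∧ strictPreV z x

/-- `d` is the differential of `x` in `M` (with respect to some lower cover of `x`). -/
def isDiff {k n : ℕ} (M : Set (Fin n → Fin (k + 1)))
    (x d : Fin n → Fin (k + 1)) : Prop :=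
  ∃ y, lowerCover M y x ∧ ∀ i, d i = if x i ≠ 0 ∧ y i = 0 then x i else 0

/-- The support of `x ∈ S_k^n`. -/
def supp {k n : ℕ} (x : Fin n → Fin (k + 1)) : Set (Fin n) := {i | x i ≠ 0}

/-- `x ⌣ y`: `x` and `y` have no common upper bound in `S_k^n`. -/
def incons {k n : ℕ} (x y : Fin n → Fin (k + 1)) : Prop :=
  ∃ i, x i ≠ 0 ∧ y i ≠ 0 ∧ x i ≠ y i


lemma pre_comp {k : ℕ} {a b c : Fin (k+1)} (ha : pre a c) (hb : pre b c) :
    (pre a b ∨ pre b a) ∧ pre a (max a b) ∧ pre (max a b) c := by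
  rcases ha with ha | ha <;> rcases hb with hb | hb
  · subst ha; subst hb; simp [pre]
  · subst ha
    refine ⟨Or.inl (Or.inl rfl), Or.inl rfl, ?_⟩
    rw [max_eq_right (Fin.zero_le _)]
    exact Or.inr hb
  · subst hb
    refine ⟨Or.inr (Or.inl rfl), ?_, ?_⟩ <;> rw [max_eq_left (Fin.zero_le _)]
    · exact Or.inr rfl
    · exact Or.inr ha
  · subst ha; subst hb
    simp [pre, max_self]

lemma strict_card {k n : ℕ} {z w : Fin n → Fin (k+1)} (h : strictPreV z w) :
    (Finset.univ.filter fun i => z i ≠ 0).card < (Finset.univ.filter fun i => w i ≠ 0).card := by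
  apply Finset.card_lt_card
  obtain ⟨i, hi⟩ := Function.ne_iff.mp h.2
  have hzi : z i = 0 := by
    rcases h.1 i with h0 | he
    · exact h0
    · exact absurd he hi
  have hwi : w i ≠ 0 := by
    intro hw; exact hi (hzi.trans hw.symm)
  constructor
  · intro j hj
    simp only [Finset.mem_filter, Finset.mem_univ, true_and] at *
    rcases h.1 j with h0 | he
    · exact absurd h0 hj
    · rw [← he]; exact hj
  · intro hsub
    have := hsub (Finset.mem_filter.mpr ⟨Finset.mem_univ i, hwi⟩)
    rw [Finset.mem_filter] at this
    exact this.2 hzi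

/-- In a simple `(⊓,⊔)`-closed set, every join-irreducible element has a unique
lower cover. -/
theorem joinIrr_unique_lowerCover (k n : ℕ) (hk : 0 < k) (hn : 0 < n)
    (M : Set (Fin n → Fin (k + 1))) (hM : closedSet M) (hs : simpleSet M)
    (x : Fin n → Fin (k + 1)) (hx : joinIrr M x) :
    ∃! y, lowerCover M y x := by
  obtain ⟨hxM, hxmin, hxlub⟩ := hx
  have hx0 : x ≠ (fun _ => 0) := by
    rintro rfl; exact hxmin hs
  set S : Set (Fin n → Fin (k+1)) := {z | z ∈ M ∧ strictPreV z x} with hSdef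
  set f : (Fin n → Fin (k+1)) → ℕ := fun z => (Finset.univ.filter fun i => z i ≠ 0).card with hf
  have hSfin : S.Finite := Set.toFinite _
  have hSne : ((fun _ => 0) : Fin n → Fin (k+1)) ∈ S :=
    ⟨hs.1, fun i => Or.inl rfl, fun h => hx0 h.symm⟩
  obtain ⟨y, hyS, hymax⟩ : ∃ y ∈ S, ∀ z ∈ S, f y ≤ f z → f y = f z := by
    obtain ⟨y, hyS, hymax⟩ := Set.Finite.exists_maximalFor f S hSfin ⟨_, hSne⟩
    exact ⟨y, hyS, fun z hz h => le_antisymm h (hymax hz h)⟩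
  have hyc : lowerCover M y x := by
    refine ⟨hyS.1, hyS.2, ?_⟩
    rintro ⟨z, hzM, h1, h2⟩
    have hzS : z ∈ S := ⟨hzM, h2⟩
    have hlt := strict_card h1
    exact (Nat.ne_of_lt hlt) (hymax z hzS (le_of_lt hlt))
  refine ⟨y, hyc, ?_⟩
  intro y' hy'
  set u : Fin n → Fin (k+1) := sqcup y' y with hu
  have huM : u ∈ M := (hM.2 y' hy'.1 y hyc.1).2
  have hcomp : ∀ i, pre (y' i) (y i) ∨ pre (y i) (y' i) :=
    fun i => (pre_comp (hy'.2.1.1 i) (hyc.2.1.1 i)).1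
  have huval : ∀ i, u i = max (y' i) (y i) := by
    intro i
    simp only [hu, sqcup, if_pos (hcomp i)]
  have hy'u : preV y' u := by
    intro i
    rw [huval i]
    exact (pre_comp (hy'.2.1.1 i) (hyc.2.1.1 i)).2.1
  have hyu : preV y u := by
    intro i
    rw [huval i, max_comm]
    exact (pre_comp (hyc.2.1.1 i) (hy'.2.1.1 i)).2.1
  have hux : preV u x := by
    intro i
    rw [huval i]
    exact (pre_comp (hy'.2.1.1 i) (hyc.2.1.1 i)).2.2
  by_cases hcase : u = x
  · exfalso
    apply hxlub
    refine ⟨hxM, fun s hs => hs.2.1, ?_⟩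
    intro w hwM hub
    have h1 : preV y' w := hub y' ⟨hy'.1, hy'.2.1⟩
    have h2 : preV y w := hub y ⟨hyc.1, hyc.2.1⟩
    rw [← hcase]
    intro i
    rw [huval i]
    exact (pre_comp (h1 i) (h2 i)).2.2
  · have h1 : y' = u := by
      by_contra h
      exact hy'.2.2 ⟨u, huM, ⟨hy'u, h⟩, hux, hcase⟩
    have h2 : y = u := by
      by_contra h
      exact hyc.2.2 ⟨u, huM, ⟨hyu, h⟩, hux, hcase⟩
    rw [h1, h2]
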